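/- Let α > 1, β > 0, p > 0, 0 < r_0 < q ≤ p, and m > 0, w > 0. Define for γ > 0: T_1(γ) = ∫_{β² q^{−2α}}^{β² r_0^{−2α}} (m/(w g))^{m−1} · e^{−(mγ/w)(1/g − r_0^{2α}/β²)} · (1/(α β² p²)) · (g/β²)^{−1−1/α} dg. Then T_1(γ) tends to 0 as γ → ∞. -/

import Mathlib

open Real Filter MeasureTheory Topology

/-- Nakagami-`(m,w)` tail contribution: for `α > 1`, `β > 0`, `p > 0`,
`0 < r₀ < q ≤ p`, `m > 0`, `w > 0`, the quantity
`T₁(γ) = ∫_{β² q^{-2α}}^{β² r₀^{-2α}} (m/(w g))^{m-1}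
  e^{-(mγ/w)(1/g - r₀^{2α}/β²)} (1/(αβ²p²)) (g/β²)^{-1-1/α} dg`
tends to `0` as `γ → ∞`. -/
theorem stmt16 (α β p r₀ q m w : ℝ)
    (hα : 1 < α) (hβ : 0 < β) (hp : 0 < p)
    (hr₀ : 0 < r₀) (hr₀q : r₀ < q) (hqp : q ≤ p)
    (hm : 0 < m) (hw : 0 < w) :
    Tendsto (fun γ : ℝ =>
        ∫ g in (β ^ 2 * q ^ (-(2 * α)))..(β ^ 2 * r₀ ^ (-(2 * α))),
          (m / (w * g)) ^ (m - 1) *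
            Real.exp (-(m * γ / w) * (1 / g - r₀ ^ (2 * α) / β ^ 2)) *
            (1 / (α * β ^ 2 * p ^ 2)) * (g / β ^ 2) ^ (-1 - 1 / α))
      atTop (nhds 0) := by
  have hq : 0 < q := hr₀.trans hr₀q
  set a : ℝ := β ^ 2 * q ^ (-(2 * α)) with ha_def
  set b : ℝ := β ^ 2 * r₀ ^ (-(2 * α)) with hb_def
  have ha0 : 0 < a := by positivity
  have hb0 : 0 < b := by positivity
  have hab : a < b := by
    have : q ^ (-(2 * α)) < r₀ ^ (-(2 * α)) :=
      Real.rpow_lt_rpow_of_neg hr₀ hr₀q (by linarith)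
    exact mul_lt_mul_of_pos_left this (by positivity)
  have hbinv : r₀ ^ (2 * α) / β ^ 2 = 1 / b := by
    have hr : (0:ℝ) < r₀ ^ (2 * α) := Real.rpow_pos_of_pos hr₀ _
    rw [hb_def, Real.rpow_neg hr₀.le]
    field_simp
  -- the dominating function
  set h : ℝ → ℝ := fun g =>
    (m / (w * g)) ^ (m - 1) * (1 / (α * β ^ 2 * p ^ 2)) * (g / β ^ 2) ^ (-1 - 1 / α)
    with hh_def
  -- the integrands
  set F : ℝ → ℝ → ℝ := fun γ g =>
    (m / (w * g)) ^ (m - 1) *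
      Real.exp (-(m * γ / w) * (1 / g - r₀ ^ (2 * α) / β ^ 2)) *
      (1 / (α * β ^ 2 * p ^ 2)) * (g / β ^ 2) ^ (-1 - 1 / α) with hF_def
  have hconv : ∀ γ : ℝ, (∫ g in a..b, F γ g) = ∫ g in Set.Ioc a b, F γ g := fun γ =>
    intervalIntegral.integral_of_le hab.le
  -- continuity of h on Icc a b
  have hcont : ContinuousOn h (Set.Icc a b) := by
    apply ContinuousOn.mul
    apply ContinuousOn.mul
    · apply ContinuousOn.rpow_const
      · exact (continuousOn_const.div (continuousOn_const.mul continuousOn_id)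
          (fun x hx => by
            have hx0 : 0 < x := by have := hx.1; linarith
            positivity))
      · intro x hx
        left
        have hx0 : 0 < x := by have := hx.1; linarith
        positivity
    · exact continuousOn_const
    · apply ContinuousOn.rpow_const
      · exact continuousOn_id.div continuousOn_const (fun x hx => by
            have hx0 : 0 < x := by have := hx.1; linarith
            positivity)
      · intro x hx
        left
        have hx0 : 0 < x := by have := hx.1; linarith
        positivity
  have hint : IntegrableOn h (Set.Ioc a b) volume :=
    (hcont.integrableOn_Icc).mono_set Set.Ioc_subset_Icc_self
  have key : Tendsto (fun γ : ℝ => ∫ g in Set.Ioc a b, F γ g) atTop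
      (𝓝 (∫ _g in Set.Ioc a b, (0:ℝ))) := by
    apply MeasureTheory.tendsto_integral_filter_of_dominated_convergence h
    · -- measurability
      filter_upwards with γ
      apply ContinuousOn.aestronglyMeasurable _ measurableSet_Ioc
      apply ContinuousOn.mul
      apply ContinuousOn.mul
      apply ContinuousOn.mul
      · apply ContinuousOn.rpow_const
        · exact (continuousOn_const.div (continuousOn_const.mul continuousOn_id)
            (fun x hx => by
            have hx0 : 0 < x := by have := hx.1; linarith
            positivity))
        · intro x hx
          left
          have hx0 : 0 < x := by have := hx.1; linarith
          positivity
      · apply Continuous.comp_continuousOn Real.continuous_exp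
        apply ContinuousOn.mul continuousOn_const
        exact ContinuousOn.sub
          (continuousOn_const.div continuousOn_id (fun x hx => by
            have hx0 : 0 < x := by have := hx.1; linarith
            positivity))
          continuousOn_const
      · exact continuousOn_const
      · apply ContinuousOn.rpow_const
        · exact continuousOn_id.div continuousOn_const (fun x hx => by
            have hx0 : 0 < x := by have := hx.1; linarith
            positivity)
        · intro x hx
          left
          have hx0 : 0 < x := by have := hx.1; linarith
          positivity
    · -- bound
      filter_upwards [eventually_ge_atTop (0:ℝ)] with γ hγ
      filter_upwards [ae_restrict_mem measurableSet_Ioc] with g hg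
      have hgpos : 0 < g := by have := hg.1; linarith
      have hA : 0 ≤ (m / (w * g)) ^ (m - 1) :=
        Real.rpow_nonneg (by positivity) _
      have hD : 0 ≤ (g / β ^ 2) ^ (-1 - 1 / α) :=
        Real.rpow_nonneg (by positivity) _
      have hC : (0:ℝ) ≤ 1 / (α * β ^ 2 * p ^ 2) := by positivity
      have hs : 0 ≤ 1 / g - r₀ ^ (2 * α) / β ^ 2 := by
        rw [hbinv]
        have : 1 / b ≤ 1 / g := one_div_le_one_div_of_le hgpos hg.2
        linarith
      have hE : Real.exp (-(m * γ / w) * (1 / g - r₀ ^ (2 * α) / β ^ 2)) ≤ 1 := by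
        apply Real.exp_le_one_iff.mpr
        have hcoef : -(m * γ / w) ≤ 0 := by
          have : 0 ≤ m * γ / w := by positivity
          linarith
        exact mul_nonpos_of_nonpos_of_nonneg hcoef hs
      have hEpos : 0 ≤ Real.exp (-(m * γ / w) * (1 / g - r₀ ^ (2 * α) / β ^ 2)) :=
        (Real.exp_pos _).le
      have hFnonneg : 0 ≤ F γ g := by
        simp only [hF_def]
        positivity
      rw [Real.norm_eq_abs, abs_of_nonneg hFnonneg]
      calc F γ g = ((m / (w * g)) ^ (m - 1) * (1 / (α * β ^ 2 * p ^ 2)) *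
              (g / β ^ 2) ^ (-1 - 1 / α)) *
              Real.exp (-(m * γ / w) * (1 / g - r₀ ^ (2 * α) / β ^ 2)) := by
            simp only [hF_def]; ring
        _ ≤ ((m / (w * g)) ^ (m - 1) * (1 / (α * β ^ 2 * p ^ 2)) *
              (g / β ^ 2) ^ (-1 - 1 / α)) * 1 := by
            apply mul_le_mul_of_nonneg_left hE
            exact mul_nonneg (mul_nonneg hA hC) hD
        _ = h g := by simp [hh_def]
    · exact hint
    · -- pointwise limit
      have hne : ∀ᵐ g : ℝ, g ≠ b := by
        rw [ae_iff]
        simp only [ne_eq, not_not, Set.setOf_eq_eq_singleton]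
        exact measure_singleton b
      filter_upwards [ae_restrict_mem measurableSet_Ioc, ae_restrict_of_ae hne]
        with g hg hgb
      have hgpos : 0 < g := lt_of_lt_of_le ha0 hg.1.le
      have hglt : g < b := lt_of_le_of_ne hg.2 hgb
      have hs : 0 < 1 / g - r₀ ^ (2 * α) / β ^ 2 := by
        rw [hbinv]
        have : 1 / b < 1 / g := one_div_lt_one_div_of_lt hgpos hglt
        linarith
      set s : ℝ := 1 / g - r₀ ^ (2 * α) / β ^ 2 with hs_def
      have hexp : Tendsto (fun γ : ℝ => Real.exp (-(m * γ / w) * s)) atTop (𝓝 0) := by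
        have h1 : Tendsto (fun γ : ℝ => (m * s / w) * γ) atTop atTop :=
          Tendsto.const_mul_atTop (by positivity) tendsto_id
        have h2 : Tendsto (fun γ : ℝ => -((m * s / w) * γ)) atTop atBot :=
          tendsto_neg_atTop_atBot.comp h1
        have h3 := Real.tendsto_exp_atBot.comp h2
        apply h3.congr
        intro γ
        simp only [Function.comp_apply]
        ring_nf
      have h4 : Tendsto (fun γ : ℝ =>
          (m / (w * g)) ^ (m - 1) * Real.exp (-(m * γ / w) * s) *
            (1 / (α * β ^ 2 * p ^ 2)) * (g / β ^ 2) ^ (-1 - 1 / α)) atTop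
          (𝓝 ((m / (w * g)) ^ (m - 1) * 0 * (1 / (α * β ^ 2 * p ^ 2)) *
            (g / β ^ 2) ^ (-1 - 1 / α))) :=
        ((tendsto_const_nhds.mul hexp).mul tendsto_const_nhds).mul tendsto_const_nhds
      simpa [hF_def, hs_def] using h4
  simp only [hconv] at *
  rw [MeasureTheory.integral_zero] at key
  exact key.congr (fun γ => (intervalIntegral.integral_of_le hab.le).symm)
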